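/- Let S = {2N + (2k+1)/3^n : N, k ∈ ℤ, n ∈ ℕ, |2k+1| < 3^n}. There exists a subset P ⊆ ℝ such that the difference set P − P is disjoint from S and the difference set Pᶜ − Pᶜ is disjoint from S, where Pᶜ = ℝ \ P. -/

import Mathlib

/-- The difference set `A - A = {a - b : a, b ∈ A}`. -/
def diffSet (A : Set ℝ) : Set ℝ := {x | ∃ a ∈ A, ∃ b ∈ A, x = a - b}

/-- The subgroup `{2m/3^n}` of ℝ. -/
def Eset : AddSubgroup ℝ where
  carrier := {x : ℝ | ∃ m : ℤ, ∃ n : ℕ, x = 2 * m / 3 ^ n}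
  zero_mem' := ⟨0, 0, by norm_num⟩
  add_mem' := by
    rintro x y ⟨a, p, rfl⟩ ⟨b, q, rfl⟩
    refine ⟨a * 3 ^ q + b * 3 ^ p, p + q, ?_⟩
    push_cast
    field_simp
    ring
  neg_mem' := by
    rintro x ⟨a, p, rfl⟩
    exact ⟨-a, p, by push_cast; ring⟩

lemma third_not_mem_Eset : (1/3 : ℝ) ∉ Eset := by
  rintro ⟨m, n, hm⟩
  have h3 : ((3:ℝ)) ^ n = 6 * m := by
    field_simp at hm
    linarith
  have h3' : (3:ℤ) ^ n = 6 * m := by exact_mod_cast h3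
  have hodd : Odd ((3:ℤ) ^ n) := Odd.pow ⟨1, by ring⟩
  rw [h3'] at hodd
  rcases hodd with ⟨t, ht⟩
  omega

lemma twothirds_mem_Eset : (2/3 : ℝ) ∈ Eset := ⟨1, 1, by norm_num⟩

lemma S_sub_third_mem (N k : ℤ) (n : ℕ) :
    (2 * (N : ℝ) + (2 * (k : ℝ) + 1) / 3 ^ n) - 1/3 ∈ Eset := by
  have hodd : Odd ((3:ℤ) ^ n) := Odd.pow ⟨1, by ring⟩
  rcases hodd with ⟨t, ht⟩
  refine ⟨N * 3 ^ (n+1) + 3 * k + 1 - t, n + 1, ?_⟩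
  have h3 : ((3:ℝ)) ^ n = 2 * t + 1 := by exact_mod_cast ht
  have hne : ((3:ℝ)) ^ n ≠ 0 := by positivity
  push_cast
  rw [pow_succ]
  field_simp
  rw [h3]
  ring

theorem exists_set_diffSets_disjoint_from_S
    (S : Set ℝ)
    (hS : S = {x : ℝ | ∃ N k : ℤ, ∃ n : ℕ, |2 * k + 1| < 3 ^ n ∧
      x = 2 * (N : ℝ) + (2 * (k : ℝ) + 1) / 3 ^ n}) :
    ∃ P : Set ℝ, Disjoint (diffSet P) S ∧ Disjoint (diffSet Pᶜ) S := by
  subst hS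
  set Q := ℝ ⧸ Eset with hQ
  let q : ℝ →+ Q := QuotientAddGroup.mk' Eset
  set c : Q := q (1/3) with hc
  have hcc : c + c = 0 := by
    have h : c + c = q (2/3) := by
      rw [hc, ← map_add]; norm_num
    rw [h]
    exact (QuotientAddGroup.eq_zero_iff _).2 twothirds_mem_Eset
  have hc0 : c ≠ 0 := fun h =>
    third_not_mem_Eset ((QuotientAddGroup.eq_zero_iff _).1 h)
  have hne : ∀ y : Q, y ≠ y + c := fun y h => hc0 (left_eq_add.1 h)
  -- setoid pairing y with y + c
  let r : Q → Q → Prop := fun y z => y = z ∨ y = z + c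
  let s : Setoid Q := ⟨r, by
    constructor
    · intro y; exact Or.inl rfl
    · rintro y z (rfl | rfl)
      · exact Or.inl rfl
      · right; rw [add_assoc, hcc, add_zero]
    · rintro y z w (rfl | rfl) (rfl | rfl)
      · exact Or.inl rfl
      · exact Or.inr rfl
      · exact Or.inr rfl
      · left; rw [add_assoc, hcc, add_zero]⟩
  let P' : Set Q := {y : Q | (Quotient.mk s y).out = y}
  have hrout : ∀ y : Q, (Quotient.mk s y).out = y ∨ (Quotient.mk s y).out = y + c :=
    fun y => Quotient.exact (s := s) ((Quotient.mk s y).out_eq)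
  have hmkc : ∀ y : Q, Quotient.mk s (y + c) = Quotient.mk s y :=
    fun y => Quotient.sound (s := s) (Or.inr rfl)
  have memP' : ∀ y : Q, y ∈ P' ↔ (Quotient.mk s y).out = y := fun y => Iff.rfl
  have memP'c : ∀ y : Q, (y + c) ∈ P' ↔ (Quotient.mk s y).out = y + c := by
    intro y
    rw [memP', hmkc]
  have key : ∀ y : Q, y ∈ P' ↔ (y + c) ∉ P' := by
    intro y
    rw [memP', memP'c]
    rcases hrout y with h | h
    · constructor
      · intro _ h2
        exact hne y (h.symm.trans h2)
      · intro _
        exact h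
    · constructor
      · intro h'
        exact absurd (h'.symm.trans h) (hne y)
      · intro h'
        exact absurd h h'
  -- key for S: q s = c for s ∈ S
  have hqS : ∀ x ∈ {x : ℝ | ∃ N k : ℤ, ∃ n : ℕ, |2 * k + 1| < 3 ^ n ∧
      x = 2 * (N : ℝ) + (2 * (k : ℝ) + 1) / 3 ^ n}, q x = c := by
    rintro x ⟨N, k, n, -, rfl⟩
    rw [hc]
    have hz : q (2 * (N : ℝ) + (2 * (k : ℝ) + 1) / 3 ^ n - 1/3) = 0 :=
      (QuotientAddGroup.eq_zero_iff _).2 (S_sub_third_mem N k n)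
    rw [map_sub] at hz
    exact sub_eq_zero.1 hz
  refine ⟨q ⁻¹' P', ?_, ?_⟩
  · rw [Set.disjoint_left]
    rintro x ⟨a, ha, b, hb, rfl⟩ hxS
    have hab : q a = q b + c := by
      have := hqS _ hxS
      rw [map_sub] at this
      rw [← this]; abel
    rw [Set.mem_preimage, hab] at ha
    exact (key (q b)).1 hb ha
  · rw [Set.disjoint_left]
    rintro x ⟨a, ha, b, hb, rfl⟩ hxS
    have hab : q a = q b + c := by
      have := hqS _ hxS
      rw [map_sub] at this
      rw [← this]; abel
    rw [Set.mem_compl_iff, Set.mem_preimage, hab] at ha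
    rw [Set.mem_compl_iff, Set.mem_preimage] at hb
    exact ha (not_not.1 (fun hn => hb ((key (q b)).2 hn)))
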